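/- Let M be a compact Riemann surface, D and D̃ two distinct effective divisors with disjoint supports such that L(D) ≅ L(D̃), with canonical holomorphic sections s_D and s_{D̃} having divisors D and D̃ respectively. If α, β are holomorphic sections of L(D) with s_D·β + s_{D̃}·α = 0, then there exists λ ∈ ℂ with β = λ·s_{D̃} and α = −λ·s_D. -/

import Mathlib

/-- Let `M` be a compact Riemann surface, `D ≠ D̃` effective
divisors with disjoint supports and `L(D) ≅ L(D̃) =: L`.  We model sections of
`L` in the function field `F` of `M`: fixing a divisor `E` with `L = L(E)`,
holomorphic sections of `L` are the `f ∈ F` with `ord_p f + E p ≥ 0` for all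
`p`; `ord` is the order-of-vanishing valuation, multiplicative on products,
vanishing on nonzero constants, and a nonzero function that is everywhere
holomorphic is a constant (compactness).  `s_D` and `s_D̃` are the sections
with divisors `D` resp. `D̃`.  If `α, β` are holomorphic sections of `L` with
`s_D·β + s_D̃·α = 0` (an equation in `H⁰(L²)`), then there is `λ ∈ ℂ` with
`β = λ·s_D̃` and `α = -λ·s_D`. -/
theorem sections_relation_forces_proportionality
    {F : Type*} [Field F] [Algebra ℂ F] {Point : Type*}
    (ord : Point → F → ℤ)
    (hordmul : ∀ (p : Point) (a b : F), a ≠ 0 → b ≠ 0 →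
      ord p (a * b) = ord p a + ord p b)
    (hordconst : ∀ (p : Point) (c : ℂ), c ≠ 0 → ord p (algebraMap ℂ F c) = 0)
    (hconst : ∀ f : F, f ≠ 0 → (∀ p, 0 ≤ ord p f) → ∃ c : ℂ, f = algebraMap ℂ F c)
    (E D Dt : Point →₀ ℤ)
    (hDeff : 0 ≤ D) (hDteff : 0 ≤ Dt) (hne : D ≠ Dt)
    (hdisj : Disjoint D.support Dt.support)
    (sD sDt : F) (hsD0 : sD ≠ 0) (hsDt0 : sDt ≠ 0)
    (hsD : ∀ p, ord p sD + E p = D p)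
    (hsDt : ∀ p, ord p sDt + E p = Dt p)
    (α β : F)
    (hα : α = 0 ∨ ∀ p, 0 ≤ ord p α + E p)
    (hβ : β = 0 ∨ ∀ p, 0 ≤ ord p β + E p)
    (heq : sD * β + sDt * α = 0) :
    ∃ lam : ℂ, β = algebraMap ℂ F lam * sDt ∧ α = -(algebraMap ℂ F lam * sD) := by
  by_cases hβ0 : β = 0
  · refine ⟨0, by simp [hβ0], ?_⟩
    have : sDt * α = 0 := by rw [hβ0] at heq; simpa using heq
    have hα0 : α = 0 := by
      rcases mul_eq_zero.mp this with h | h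
      · exact absurd h hsDt0
      · exact h
    simp [hα0]
  · have hβ' : ∀ p, 0 ≤ ord p β + E p := hβ.resolve_left hβ0
    have hα0 : α ≠ 0 := by
      intro h
      rw [h, mul_zero, add_zero] at heq
      exact (mul_ne_zero hsD0 hβ0) heq
    have hα' : ∀ p, 0 ≤ ord p α + E p := hα.resolve_left hα0
    have ordinv : ∀ (p : Point) (a : F), a ≠ 0 → ord p a⁻¹ = -ord p a := by
      intro p a ha
      have h1 : ord p ((1:F)) = 0 := by
        have := hordconst p 1 one_ne_zero
        simpa using this
      have := hordmul p a a⁻¹ ha (inv_ne_zero ha)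
      rw [mul_inv_cancel₀ ha, h1] at this
      omega
    set f := β * sDt⁻¹ with hf
    have hf0 : f ≠ 0 := mul_ne_zero hβ0 (inv_ne_zero hsDt0)
    have hfeq : f = (-α) * sD⁻¹ := by
      rw [hf]
      field_simp
      linear_combination heq
    have key : ∀ p, 0 ≤ ord p f := by
      intro p
      by_cases hDt : Dt p = 0
      · have : ord p f = ord p β - ord p sDt := by
          rw [hf, hordmul p β sDt⁻¹ hβ0 (inv_ne_zero hsDt0), ordinv p sDt hsDt0]
          ring
        have h1 := hβ' p
        have h2 := hsDt p
        omega
      · have hpDt : p ∈ Dt.support := Finsupp.mem_support_iff.mpr hDt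
        have hpD : D p = 0 := by
          have := Finset.disjoint_right.mp hdisj hpDt
          simpa [Finsupp.mem_support_iff] using this
        have hnegα : ord p (-α) = ord p α := by
          have : (-α : F) = algebraMap ℂ F (-1) * α := by simp
          rw [this, hordmul p _ α (by simp : algebraMap ℂ F (-1) ≠ 0) hα0,
            hordconst p (-1) (by norm_num)]
          ring
        have : ord p f = ord p α - ord p sD := by
          rw [hfeq, hordmul p (-α) sD⁻¹ (neg_ne_zero.mpr hα0) (inv_ne_zero hsD0),
            ordinv p sD hsD0, hnegα]
          ring
        have h1 := hα' p
        have h2 := hsD p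
        omega
    obtain ⟨c, hc⟩ := hconst f hf0 key
    refine ⟨c, ?_, ?_⟩
    · have : β = f * sDt := by rw [hf, inv_mul_cancel_right₀ hsDt0]
      rw [this, hc]
    · have hβc : β = algebraMap ℂ F c * sDt := by
        have : β = f * sDt := by rw [hf, inv_mul_cancel_right₀ hsDt0]
        rw [this, hc]
      rw [hβc] at heq
      have : sDt * (α + algebraMap ℂ F c * sD) = 0 := by ring_nf; linear_combination heq
      rcases mul_eq_zero.mp this with h | h
      · exact absurd h hsDt0
      · linear_combination h
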